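/- Let G be a topological-minor-closed class of graphs, H a graph, and L an essential G-duplicable independent collection of separations of H. Then every torso of L belongs to G. -/

import Mathlib

def IsSeparation {V : Type} (G : SimpleGraph V) (p : Set V × Set V) : Prop :=
  p.1 ∪ p.2 = Set.univ ∧ ∀ a ∈ p.1 \ p.2, ∀ b ∈ p.2 \ p.1, ¬ G.Adj a b

def IsIndepCollection {V : Type} (G : SimpleGraph V) (C : Set (Set V × Set V)) : Prop :=
  (∀ p ∈ C, IsSeparation G p ∧ (p.1 \ p.2).Nonempty) ∧
  ∀ p ∈ C, ∀ q ∈ C, p ≠ q → p.1 ⊆ q.2 ∧ q.1 ⊆ p.2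

/-- A collection `L` of separations of `H` is essential if for every `(A,B) ∈ L`, every
vertex of `A ∩ B` has a neighbor in `A \ B` and `H[A \ B]` is connected. -/
def EssentialCollection {V : Type} (H : SimpleGraph V) (L : Set (Set V × Set V)) : Prop :=
  ∀ p ∈ L, (∀ v ∈ p.1 ∩ p.2, ∃ u ∈ p.1 \ p.2, H.Adj v u) ∧
    (H.induce (p.1 \ p.2)).Connected

def wedgeRel {V : Type} (H : SimpleGraph V) (Z : Set V) (k : ℕ) :
    (↥Z ⊕ (↥(Zᶜ) × Fin k)) → (↥Z ⊕ (↥(Zᶜ) × Fin k)) → Prop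
  | Sum.inl z, Sum.inl z' => H.Adj z z'
  | Sum.inl z, Sum.inr (v, _) => H.Adj z v
  | Sum.inr (v, _), Sum.inl z => H.Adj v z
  | Sum.inr (v, i), Sum.inr (w, j) => i = j ∧ H.Adj v w

/-- `H ∧_k Z`: `k` disjoint copies of `H` with the copies of each `z ∈ Z` identified. -/
def wedge {V : Type} (H : SimpleGraph V) (Z : Set V) (k : ℕ) :
    SimpleGraph (↥Z ⊕ (↥(Zᶜ) × Fin k)) :=
  SimpleGraph.fromRel (wedgeRel H Z k)

/-- `⋂_{(A,B) ∈ C} B`. -/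
def interB {V : Type} (C : Set (Set V × Set V)) : Set V := ⋂ p ∈ C, p.2

/-- `H ∧_k C := H ∧_k (⋂_{(A,B) ∈ C} B)`. -/
def wedgeC {V : Type} (H : SimpleGraph V) (C : Set (Set V × Set V)) (k : ℕ) :
    SimpleGraph (↥(interB C) ⊕ (↥((interB C)ᶜ) × Fin k)) :=
  wedge H (interB C) k

/-- A class of graphs, given as a predicate on graphs over arbitrary vertex types. -/
abbrev GraphClass : Type 1 := ∀ (U : Type), SimpleGraph U → Prop

/-- `H` is isomorphic to a subgraph of `G`. -/
def SubgraphOf {V W : Type} (H : SimpleGraph V) (G : SimpleGraph W) : Prop :=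
  ∃ f : V → W, Function.Injective f ∧ ∀ ⦃u v⦄, H.Adj u v → G.Adj (f u) (f v)

/-- A class of (finite) graphs is monotone if it is closed under taking subgraphs. -/
def MonotoneClass (𝒢 : GraphClass) : Prop :=
  ∀ (V W : Type) [Fintype V] [Fintype W] (H : SimpleGraph V) (G : SimpleGraph W),
    SubgraphOf H G → 𝒢 W G → 𝒢 V H

/-- An independent collection `L` of separations of `H` is `𝒢`-duplicable if
`H ∧_k L ∈ 𝒢` for infinitely many positive integers `k`. -/
def Duplicable (𝒢 : GraphClass) {V : Type} (H : SimpleGraph V)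
    (L : Set (Set V × Set V)) : Prop :=
  {k : ℕ | 0 < k ∧ 𝒢 _ (wedgeC H L k)}.Infinite

/-- `H` is a topological minor of `G`: some subgraph of `G` is isomorphic to a subdivision
of `H`. -/
def IsTopMinor {V W : Type} (H : SimpleGraph V) (G : SimpleGraph W) : Prop :=
  ∃ (f : V → W) (p : ∀ ⦃u v : V⦄, H.Adj u v → G.Walk (f u) (f v)),
    Function.Injective f ∧
    (∀ ⦃u v⦄ (h : H.Adj u v), (p h).IsPath) ∧
    (∀ ⦃u v⦄ (h : H.Adj u v) (x : W), x ∈ (p h).support → x ≠ f u → x ≠ f v →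
      (∀ z, f z ≠ x) ∧
      ∀ ⦃u' v'⦄ (h' : H.Adj u' v'), x ∈ (p h').support → s(u, v) = s(u', v'))

/-- The central torso of `L`. -/
def centralTorso {V : Type} (H : SimpleGraph V) (L : Set (Set V × Set V)) :
    SimpleGraph (↥(interB L)) :=
  SimpleGraph.fromRel fun a b =>
    H.Adj a b ∨ ∃ p ∈ L, (a : V) ∈ p.1 ∩ p.2 ∧ (b : V) ∈ p.1 ∩ p.2

/-- The peripheral torso for `(X,Y) ∈ L`. -/
def periTorso {V : Type} (H : SimpleGraph V) (X Y : Set V) : SimpleGraph (↥X) :=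
  SimpleGraph.fromRel fun a b =>
    H.Adj a b ∨ ((a : V) ∈ X ∩ Y ∧ (b : V) ∈ X ∩ Y)

section Aux

open SimpleGraph

variable {V : Type} {H : SimpleGraph V} {Z : Set V} {k : ℕ}

lemma wadj_inl_inl {z z' : ↥Z} (h : H.Adj z z') :
    (wedge H Z k).Adj (Sum.inl z) (Sum.inl z') := by
  refine (SimpleGraph.fromRel_adj _ _ _).mpr ⟨?_, Or.inl h⟩
  intro e
  exact H.irrefl (by cases e; exact h)

lemma wadj_inl_inr {z : ↥Z} {v : ↥(Zᶜ)} {i : Fin k} (h : H.Adj z v) :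
    (wedge H Z k).Adj (Sum.inl z) (Sum.inr (v, i)) :=
  (SimpleGraph.fromRel_adj _ _ _).mpr ⟨by simp, Or.inl h⟩

lemma wadj_inr_inl {z : ↥Z} {v : ↥(Zᶜ)} {i : Fin k} (h : H.Adj v z) :
    (wedge H Z k).Adj (Sum.inr (v, i)) (Sum.inl z) :=
  (SimpleGraph.fromRel_adj _ _ _).mpr ⟨by simp, Or.inl h⟩

lemma wadj_inr_inr {v w : ↥(Zᶜ)} {i : Fin k} (h : H.Adj v w) :
    (wedge H Z k).Adj (Sum.inr (v, i)) (Sum.inr (w, i)) := by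
  refine (SimpleGraph.fromRel_adj _ _ _).mpr ⟨?_, Or.inl ⟨rfl, h⟩⟩
  intro e
  exact H.irrefl (by cases e; exact h)

/-- Build a walk between two identified vertices through copy `i` of `A \ B`. -/
lemma walk_builder (H : SimpleGraph V) (Z : Set V) (k : ℕ)
    (A B : Set V)
    (hAB : ∀ v ∈ A ∩ B, ∃ u ∈ A \ B, H.Adj v u)
    (hconn : (H.induce (A \ B)).Connected)
    (hsub : A \ B ⊆ Zᶜ)
    (a b : ↥Z) (ha : (a : V) ∈ A ∩ B) (hb : (b : V) ∈ A ∩ B) (i : Fin k) :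
    ∃ W : (wedge H Z k).Walk (Sum.inl a) (Sum.inl b),
      ∀ x ∈ W.support, x = Sum.inl a ∨ x = Sum.inl b ∨ ∃ w, x = Sum.inr (w, i) := by
  obtain ⟨ua, hua, haua⟩ := hAB a ha
  obtain ⟨ub, hub, hbub⟩ := hAB b hb
  obtain ⟨W0⟩ := hconn.preconnected ⟨ua, hua⟩ ⟨ub, hub⟩
  let g : (H.induce (A \ B)) →g (wedge H Z k) :=
    { toFun := fun v => Sum.inr (⟨v.1, hsub v.2⟩, i),
      map_rel' := fun hadj => wadj_inr_inr hadj }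
  have adj1 : (wedge H Z k).Adj (Sum.inl a) (Sum.inr (⟨ua, hsub hua⟩, i)) :=
    wadj_inl_inr haua
  have adj2 : (wedge H Z k).Adj (Sum.inr (⟨ub, hsub hub⟩, i)) (Sum.inl b) :=
    wadj_inr_inl hbub.symm
  refine ⟨SimpleGraph.Walk.cons adj1 ((W0.map g).concat adj2), ?_⟩
  intro x hx
  rw [SimpleGraph.Walk.support_cons] at hx
  rcases List.mem_cons.mp hx with rfl | hx
  · exact Or.inl rfl
  rw [SimpleGraph.Walk.support_concat] at hx
  rcases List.mem_append.mp hx with hx | hx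
  swap
  · rw [List.mem_singleton] at hx; subst hx; exact Or.inr (Or.inl rfl)
  · rw [SimpleGraph.Walk.support_map] at hx
    obtain ⟨y, _, rfl⟩ := List.mem_map.mp hx
    exact Or.inr (Or.inr ⟨_, rfl⟩)

/-- Abstract criterion for being a topological minor: disjoint reservoirs of internal
vertices for each potential edge. -/
lemma isTopMinor_of_walks {V W : Type} {T : SimpleGraph V} {G : SimpleGraph W}
    (f : V → W) (ι : Sym2 V → Set W)
    (hf : Function.Injective f)
    (hdisj : ∀ s t : Sym2 V, ∀ x, x ∈ ι s → x ∈ ι t → s = t)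
    (hrange : ∀ s x, x ∈ ι s → ∀ z, f z ≠ x)
    (hwalk : ∀ u v, T.Adj u v → ∃ p : G.Walk (f u) (f v),
      ∀ x ∈ p.support, x = f u ∨ x = f v ∨ x ∈ ι s(u, v)) :
    IsTopMinor T G := by
  classical
  choose Wk hWk using hwalk
  refine ⟨f, fun u v h => (Wk u v h).bypass, hf, fun u v h => SimpleGraph.Walk.bypass_isPath _,
    fun u v h x hx hxu hxv => ?_⟩
  have hx' := SimpleGraph.Walk.support_bypass_subset _ hx
  rcases hWk u v h x hx' with rfl | rfl | hι
  · exact absurd rfl hxu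
  · exact absurd rfl hxv
  refine ⟨hrange _ x hι, fun u' v' h' hx'' => ?_⟩
  have hx''' := SimpleGraph.Walk.support_bypass_subset _ hx''
  rcases hWk u' v' h' x hx''' with he | he | hι'
  · exact absurd he.symm (hrange _ x hι u')
  · exact absurd he.symm (hrange _ x hι v')
  · exact hdisj _ _ x hι hι'

variable (Z) in
/-- The embedding of the peripheral torso's vertex set into the wedge's vertex set. -/
noncomputable def periMap {X : Set V} (hk : 0 < k) (x : ↥X) :
    ↥Z ⊕ (↥(Zᶜ) × Fin k) := by
  classical
  exact if h : (x : V) ∈ Z then Sum.inl ⟨x, h⟩ else Sum.inr (⟨x, h⟩, ⟨0, hk⟩)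

lemma periMap_pos {X : Set V} (hk : 0 < k) {x : ↥X} (h : (x : V) ∈ Z) :
    periMap Z hk x = Sum.inl ⟨x, h⟩ := by
  classical
  simp [periMap, h]

lemma periMap_neg {X : Set V} (hk : 0 < k) {x : ↥X} (h : (x : V) ∉ Z) :
    periMap Z hk x = Sum.inr (⟨x, h⟩, ⟨0, hk⟩) := by
  classical
  simp [periMap, h]

lemma periMap_injective {X : Set V} (hk : 0 < k) :
    Function.Injective (periMap Z (X := X) hk) := by
  classical
  intro x y hxy
  by_cases hx : (x : V) ∈ Z <;> by_cases hy : (y : V) ∈ Z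
  · rw [periMap_pos hk hx, periMap_pos hk hy] at hxy
    simp only [Sum.inl.injEq, Subtype.mk.injEq] at hxy
    exact Subtype.ext hxy
  · rw [periMap_pos hk hx, periMap_neg hk hy] at hxy
    exact absurd hxy (by simp)
  · rw [periMap_neg hk hx, periMap_pos hk hy] at hxy
    exact absurd hxy (by simp)
  · rw [periMap_neg hk hx, periMap_neg hk hy] at hxy
    simp only [Sum.inr.injEq, Prod.mk.injEq, Subtype.mk.injEq] at hxy
    exact Subtype.ext hxy.1

end Aux

/-- Let `𝒢` be a topological-minor-closed class of graphs, `H` a graph, and `L` an essential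
`𝒢`-duplicable independent collection of separations of `H`.  Then every torso of `L`
belongs to `𝒢`. -/
theorem stmt13 (𝒢 : GraphClass)
    (hclosed : ∀ (V W : Type) [Fintype V] [Fintype W] (H : SimpleGraph V)
        (G : SimpleGraph W), IsTopMinor H G → 𝒢 W G → 𝒢 V H)
    {V : Type} [Fintype V] (H : SimpleGraph V)
    (L : Set (Set V × Set V)) (hL : IsIndepCollection H L)
    (hess : EssentialCollection H L) (hdup : Duplicable 𝒢 H L) :
    𝒢 _ (centralTorso H L) ∧ ∀ p ∈ L, 𝒢 _ (periTorso H p.1 p.2) := by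
  classical
  obtain ⟨k, hk_mem, hkN⟩ := hdup.exists_gt (Fintype.card (Sym2 V) + 1)
  obtain ⟨hkpos, h𝒢⟩ := hk_mem
  set Z : Set V := interB L with hZdef
  let e := Fintype.equivFin (Sym2 V)
  let idx : Sym2 V → Fin k := fun s => ⟨(e s).1 + 1, by have := (e s).2; omega⟩
  have idx_inj : Function.Injective idx := by
    intro s t h
    apply e.injective
    have h' : (e s).1 + 1 = (e t).1 + 1 := congrArg Fin.val h
    exact Fin.ext (by omega)
  have idx_ne0 : ∀ s, (idx s).1 ≠ 0 := fun s => Nat.succ_ne_zero _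
  haveI : Fintype ↥Z := Fintype.ofFinite _
  haveI : Fintype ↥(Zᶜ) := Fintype.ofFinite _
  -- basic set facts
  have hZsub : ∀ p ∈ L, Z ⊆ p.2 := fun p hp => Set.biInter_subset_of_mem hp
  have hdiffsub : ∀ p ∈ L, p.1 \ p.2 ⊆ Zᶜ := fun p hp v hv hvZ => hv.2 (hZsub p hp hvZ)
  have hinter : ∀ p ∈ L, p.1 ∩ p.2 ⊆ Z := by
    intro p hp v hv
    refine Set.mem_iInter₂.mpr fun q hq => ?_
    by_cases h : q = p
    · subst h; exact hv.2
    · exact (hL.2 p hp q hq (fun he => h he.symm)).1 hv.1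
  -- the reservoirs of internal vertices
  let ι : Sym2 V → Set (↥Z ⊕ (↥(Zᶜ) × Fin k)) :=
    fun s => {x | ∃ w, x = Sum.inr (w, idx s)}
  have hdisj : ∀ s t : Sym2 V, ∀ x, x ∈ ι s → x ∈ ι t → s = t := by
    rintro s t x ⟨w, rfl⟩ ⟨w', he⟩
    simp only [Sum.inr.injEq, Prod.mk.injEq] at he
    exact idx_inj he.2
  constructor
  · -- central torso
    let ιC : Sym2 ↥Z → Set (↥Z ⊕ (↥(Zᶜ) × Fin k)) := fun s => ι (s.map Subtype.val)
    have hdisjC : ∀ s t : Sym2 ↥Z, ∀ x, x ∈ ιC s → x ∈ ιC t → s = t :=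
      fun s t x hs ht => Sym2.map.injective Subtype.val_injective (hdisj _ _ x hs ht)
    have hwalkC : ∀ u v : ↥Z, (centralTorso H L).Adj u v →
        ∃ p : (wedgeC H L k).Walk (Sum.inl u) (Sum.inl v),
          ∀ x ∈ p.support, x = Sum.inl u ∨ x = Sum.inl v ∨ x ∈ ιC s(u, v) := by
      intro u v h
      rw [centralTorso, SimpleGraph.fromRel_adj] at h
      obtain ⟨hne, hrel⟩ := h
      by_cases hH : H.Adj ↑u ↑v
      · refine ⟨SimpleGraph.Walk.cons (wadj_inl_inl hH) SimpleGraph.Walk.nil, ?_⟩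
        intro x hx
        change x ∈ [Sum.inl u, Sum.inl v] at hx
        simp only [SimpleGraph.Walk.support_cons, SimpleGraph.Walk.support_nil,
          List.mem_cons, List.mem_singleton, List.not_mem_nil, or_false] at hx
        tauto
      · have hclq : ∃ p ∈ L, (↑u : V) ∈ p.1 ∩ p.2 ∧ (↑v : V) ∈ p.1 ∩ p.2 := by
          rcases hrel with (hH' | ⟨p, hp, h1, h2⟩) | (hH' | ⟨p, hp, h1, h2⟩)
          · exact absurd hH' hH
          · exact ⟨p, hp, h1, h2⟩
          · exact absurd hH'.symm hH
          · exact ⟨p, hp, h2, h1⟩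
        obtain ⟨p, hp, hu, hv⟩ := hclq
        obtain ⟨W, hW⟩ := walk_builder H Z k p.1 p.2 (hess p hp).1 (hess p hp).2
          (hdiffsub p hp) u v hu hv (idx s(u, v))
        exact ⟨W, fun x hx => (hW x hx).imp id (Or.imp id (fun ⟨w, hw⟩ => ⟨w, hw⟩))⟩
    have htop : IsTopMinor (centralTorso H L) (wedgeC H L k) := by
      refine isTopMinor_of_walks Sum.inl ιC Sum.inl_injective hdisjC ?_ hwalkC
      rintro s x ⟨w, rfl⟩ z he
      exact Sum.inl_ne_inr he
    exact hclosed _ _ _ _ htop h𝒢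
  · -- peripheral torsos
    intro p hp
    haveI : Fintype ↥p.1 := Fintype.ofFinite _
    let ιP : Sym2 ↥p.1 → Set (↥Z ⊕ (↥(Zᶜ) × Fin k)) := fun s => ι (s.map Subtype.val)
    have hdisjP : ∀ s t : Sym2 ↥p.1, ∀ x, x ∈ ιP s → x ∈ ιP t → s = t :=
      fun s t x hs ht => Sym2.map.injective Subtype.val_injective (hdisj _ _ x hs ht)
    set f : ↥p.1 → ↥Z ⊕ (↥(Zᶜ) × Fin k) := periMap Z hkpos with hfdef
    have hwalkP : ∀ u v : ↥p.1, (periTorso H p.1 p.2).Adj u v →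
        ∃ W : (wedgeC H L k).Walk (f u) (f v),
          ∀ x ∈ W.support, x = f u ∨ x = f v ∨ x ∈ ιP s(u, v) := by
      intro u v h
      rw [periTorso, SimpleGraph.fromRel_adj] at h
      obtain ⟨hne, hrel⟩ := h
      by_cases hH : H.Adj ↑u ↑v
      · have hadj : (wedgeC H L k).Adj (f u) (f v) := by
          by_cases hu : (↑u : V) ∈ Z <;> by_cases hv : (↑v : V) ∈ Z
          · rw [hfdef, periMap_pos hkpos hu, periMap_pos hkpos hv]
            exact wadj_inl_inl hH
          · rw [hfdef, periMap_pos hkpos hu, periMap_neg hkpos hv]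
            exact wadj_inl_inr hH
          · rw [hfdef, periMap_neg hkpos hu, periMap_pos hkpos hv]
            exact wadj_inr_inl hH
          · rw [hfdef, periMap_neg hkpos hu, periMap_neg hkpos hv]
            exact wadj_inr_inr hH
        refine ⟨SimpleGraph.Walk.cons hadj SimpleGraph.Walk.nil, ?_⟩
        intro x hx
        simp only [SimpleGraph.Walk.support_cons, SimpleGraph.Walk.support_nil,
          List.mem_cons, List.mem_singleton, List.not_mem_nil, or_false] at hx
        tauto
      · have hclq : (↑u : V) ∈ p.1 ∩ p.2 ∧ (↑v : V) ∈ p.1 ∩ p.2 := by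
          rcases hrel with (hH' | ⟨h1, h2⟩) | (hH' | ⟨h1, h2⟩)
          · exact absurd hH' hH
          · exact ⟨h1, h2⟩
          · exact absurd hH'.symm hH
          · exact ⟨h2, h1⟩
        obtain ⟨hu, hv⟩ := hclq
        have huZ : (↑u : V) ∈ Z := hinter p hp hu
        have hvZ : (↑v : V) ∈ Z := hinter p hp hv
        obtain ⟨W, hW⟩ := walk_builder H Z k p.1 p.2 (hess p hp).1 (hess p hp).2
          (hdiffsub p hp) ⟨↑u, huZ⟩ ⟨↑v, hvZ⟩ hu hv (idx s(u, v))
        have hfu : f u = Sum.inl ⟨↑u, huZ⟩ := by rw [hfdef, periMap_pos hkpos huZ]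
        have hfv : f v = Sum.inl ⟨↑v, hvZ⟩ := by rw [hfdef, periMap_pos hkpos hvZ]
        refine ⟨W.copy hfu.symm hfv.symm, ?_⟩
        intro x hx
        change x ∈ (W.copy hfu.symm hfv.symm : (wedge H Z k).Walk _ _).support at hx
        rw [SimpleGraph.Walk.support_copy] at hx
        rcases hW x hx with he | he | ⟨w, hw⟩
        · exact Or.inl (by rw [hfu]; exact he)
        · exact Or.inr (Or.inl (by rw [hfv]; exact he))
        · exact Or.inr (Or.inr ⟨w, hw⟩)
    have htop : IsTopMinor (periTorso H p.1 p.2) (wedgeC H L k) := by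
      refine isTopMinor_of_walks f ιP (periMap_injective hkpos) hdisjP ?_ hwalkP
      rintro s x ⟨w, rfl⟩ z he
      by_cases hz : (↑z : V) ∈ Z
      · rw [hfdef, periMap_pos hkpos hz] at he
        exact Sum.inl_ne_inr he
      · rw [hfdef, periMap_neg hkpos hz] at he
        simp only [Sum.inr.injEq, Prod.mk.injEq] at he
        exact idx_ne0 _ (by rw [← he.2])
    exact hclosed _ _ _ _ htop h𝒢
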